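/- Let A generate a contractive C0-semigroup on a Hilbert space H and suppose the abstract control system y' = Ay + Bu (with admissible control operator B) is smoothly controllable in time T_0 with constant C: for every y_0 ∈ D(A^s) there is v ∈ L^∞((0,T_0);V) with y(T_0; y_0, v) = 0 and ||v||_{L^∞((0,T_0);V)} ≤ C||y_0||_{D(A^s)}. Then for every ε > 0 and η_0 ∈ D(A^s), choosing any integer N > C||η_0||_{D(A^s)}/ε, there exists a control v ∈ L^∞((0, N T_0); V) with ||v||_{L^∞;V} ≤ ε steering η_0 to 0 in time N T_0; i.e., the system is null-controllable by arbitrarily small controls in V, in sufficiently large time T̄ = N T_0 depending on ε and ||η_0||_{D(A^s)}. -/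

import Mathlib

open MeasureTheory

/-- Null controllability by arbitrarily small smooth controls: if the system
`y' = Ay + B(e v)` is smoothly controllable in time `T₀` with constant `C` (from data in
`D(A^s)` with the graph norm), and the semigroup is contractive and commutes with `A`,
then for every `ε > 0`, every `η₀`, and every integer `N > C‖η₀‖_{D(A^s)}/ε`, there is a
control of size at most `ε` in `V` steering `η₀` to `0` in time `N T₀`. -/
theorem stmt8 {H U V : Type*}
    [NormedAddCommGroup H] [InnerProductSpace ℝ H] [CompleteSpace H]
    [NormedAddCommGroup U] [NormedSpace ℝ U]
    [NormedAddCommGroup V] [NormedSpace ℝ V]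
    (Tsg : ℝ → H →L[ℝ] H) (A : H →ₗ[ℝ] H) (B : U →L[ℝ] H) (e : V →L[ℝ] U)
    (hT0 : Tsg 0 = 1)
    (hTadd : ∀ s t : ℝ, 0 ≤ s → 0 ≤ t → Tsg (s + t) = (Tsg s).comp (Tsg t))
    (hcontr : ∀ t : ℝ, 0 ≤ t → ‖Tsg t‖ ≤ 1)
    (hcomm : ∀ t : ℝ, 0 ≤ t → ∀ x : H, Tsg t (A x) = A (Tsg t x))
    (s : ℕ) (T0 : ℝ) (hT0pos : 0 < T0) (C : ℝ) (hC : 0 < C)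
    -- smooth controllability in time `T₀` with constant `C`
    (hsc : ∀ y0 : H, ∃ v : ℝ → V,
      IntervalIntegrable (fun r => Tsg (T0 - r) (B (e (v r)))) volume 0 T0 ∧
      Tsg T0 y0 + ∫ r in (0 : ℝ)..T0, Tsg (T0 - r) (B (e (v r))) = 0 ∧
      ∀ t : ℝ, ‖v t‖ ≤ C * Real.sqrt (∑ j ∈ Finset.range (s + 1), ‖(A ^ j) y0‖ ^ 2)) :
    ∀ ε : ℝ, 0 < ε → ∀ η0 : H, ∀ N : ℕ,
      C * Real.sqrt (∑ j ∈ Finset.range (s + 1), ‖(A ^ j) η0‖ ^ 2) / ε < N →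
      ∃ v : ℝ → V, (∀ t : ℝ, ‖v t‖ ≤ ε) ∧
        IntervalIntegrable (fun r => Tsg ((N : ℝ) * T0 - r) (B (e (v r)))) volume 0 ((N : ℝ) * T0) ∧
        Tsg ((N : ℝ) * T0) η0 +
          ∫ r in (0 : ℝ)..((N : ℝ) * T0), Tsg ((N : ℝ) * T0 - r) (B (e (v r))) = 0 := by
  intro ε hε η0 N hN
  set S : ℝ := Real.sqrt (∑ j ∈ Finset.range (s + 1), ‖(A ^ j) η0‖ ^ 2) with hS
  have hSnn : 0 ≤ S := Real.sqrt_nonneg _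
  -- N is positive
  have hNpos : 0 < N := by
    rcases Nat.eq_zero_or_pos N with h | h
    · exfalso
      rw [h] at hN
      have : 0 ≤ C * S / ε := by positivity
      simp at hN
      linarith
    · exact h
  have hNR : (0 : ℝ) < N := by exact_mod_cast hNpos
  -- choose the controls
  choose w hwint hwnull hwbnd using hsc
  -- commutation of the semigroup with powers of A
  have hcommPow : ∀ j : ℕ, ∀ t : ℝ, 0 ≤ t → ∀ x : H, Tsg t ((A ^ j) x) = (A ^ j) (Tsg t x) := by
    intro j
    induction j with
    | zero => intro t ht x; simp
    | succ j ih =>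
      intro t ht x
      have h1 : (A ^ (j + 1)) x = (A ^ j) (A x) := by
        rw [pow_succ]; rfl
      have h2 : (A ^ (j + 1)) (Tsg t x) = (A ^ j) (A (Tsg t x)) := by
        rw [pow_succ]; rfl
      rw [h1, h2, ← hcomm t ht x, ih t ht (A x)]
  -- contractivity
  have hTle : ∀ t : ℝ, 0 ≤ t → ∀ x : H, ‖Tsg t x‖ ≤ ‖x‖ := by
    intro t ht x
    calc ‖Tsg t x‖ ≤ ‖Tsg t‖ * ‖x‖ := (Tsg t).le_opNorm x
    _ ≤ 1 * ‖x‖ := mul_le_mul_of_nonneg_right (hcontr t ht) (norm_nonneg x)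
    _ = ‖x‖ := one_mul _
  -- the intermediate states
  set z : ℕ → H := fun k => ((N : ℝ)⁻¹) • Tsg ((k : ℝ) * T0) η0 with hz
  have hkT0nn : ∀ k : ℕ, (0 : ℝ) ≤ (k : ℝ) * T0 := fun k =>
    mul_nonneg (Nat.cast_nonneg k) hT0pos.le
  -- smallness of the intermediate states in the graph norm
  have hzbnd : ∀ k : ℕ,
      Real.sqrt (∑ j ∈ Finset.range (s + 1), ‖(A ^ j) (z k)‖ ^ 2) ≤ (N : ℝ)⁻¹ * S := by
    intro k
    have hterm : ∀ j : ℕ, ‖(A ^ j) (z k)‖ ≤ (N : ℝ)⁻¹ * ‖(A ^ j) η0‖ := by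
      intro j
      have h1 : (A ^ j) (z k) = ((N : ℝ)⁻¹) • Tsg ((k : ℝ) * T0) ((A ^ j) η0) := by
        rw [hz, LinearMap.map_smul, hcommPow j _ (hkT0nn k) η0]
      rw [h1, norm_smul]
      simp only [norm_inv, Real.norm_natCast]
      exact mul_le_mul_of_nonneg_left (hTle _ (hkT0nn k) _) (by positivity)
    have hsum : ∑ j ∈ Finset.range (s + 1), ‖(A ^ j) (z k)‖ ^ 2 ≤
        ((N : ℝ)⁻¹) ^ 2 * ∑ j ∈ Finset.range (s + 1), ‖(A ^ j) η0‖ ^ 2 := by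
      rw [Finset.mul_sum]
      refine Finset.sum_le_sum fun j _ => ?_
      have := hterm j
      nlinarith [norm_nonneg ((A ^ j) (z k)), norm_nonneg ((A ^ j) η0)]
    calc Real.sqrt (∑ j ∈ Finset.range (s + 1), ‖(A ^ j) (z k)‖ ^ 2)
        ≤ Real.sqrt (((N : ℝ)⁻¹) ^ 2 * ∑ j ∈ Finset.range (s + 1), ‖(A ^ j) η0‖ ^ 2) :=
          Real.sqrt_le_sqrt hsum
      _ = (N : ℝ)⁻¹ * S := by
          rw [Real.sqrt_mul (sq_nonneg _), Real.sqrt_sq (by positivity), hS]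
  -- the index function and the global control
  set idx : ℝ → ℕ := fun t => min (N - 1) ⌊t / T0⌋₊ with hidx
  set v : ℝ → V := fun t => w (z (idx t)) (t - (idx t : ℝ) * T0) with hv
  -- the control is small
  have hvbnd : ∀ t : ℝ, ‖v t‖ ≤ ε := by
    intro t
    have h1 : ‖v t‖ ≤ C * ((N : ℝ)⁻¹ * S) :=
      le_trans (hwbnd (z (idx t)) _)
        (mul_le_mul_of_nonneg_left (hzbnd (idx t)) hC.le)
    have h2 : C * S < (N : ℝ) * ε := by
      rw [div_lt_iff₀ hε] at hN
      linarith
    have h3 : C * ((N : ℝ)⁻¹ * S) = C * S / (N : ℝ) := by ring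
    rw [h3] at h1
    refine le_trans h1 ?_
    rw [div_le_iff₀ hNR]
    linarith
  refine ⟨v, hvbnd, ?_⟩
  -- the partition points
  set a : ℕ → ℝ := fun k => (k : ℝ) * T0 with ha
  -- the integrand
  set F : ℝ → H := fun r => Tsg ((N : ℝ) * T0 - r) (B (e (v r))) with hF
  -- on each open subinterval the index is constant
  have hidxeq : ∀ k : ℕ, k < N → ∀ r ∈ Set.Ioo (a k) (a (k + 1)), idx r = k := by
    intro k hk r hr
    have hanneg : (0 : ℝ) ≤ a k := hkT0nn k
    have hr0 : 0 ≤ r := le_of_lt (lt_of_le_of_lt hanneg hr.1)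
    have hfl : ⌊r / T0⌋₊ = k := by
      rw [Nat.floor_eq_iff (by positivity)]
      constructor
      · rw [le_div_iff₀ hT0pos]; exact hr.1.le
      · rw [div_lt_iff₀ hT0pos]
        have : ((k : ℝ) + 1) * T0 = a (k + 1) := by rw [ha]; push_cast; ring
        rw [this]; exact hr.2
    rw [hidx]
    simp only [hfl]
    omega
  -- integrability and value of the integral on each subinterval
  have hpiece : ∀ k : ℕ, k < N →
      IntervalIntegrable F volume (a k) (a (k + 1)) ∧
      ∫ r in (a k)..(a (k + 1)), F r = -(((N : ℝ)⁻¹) • Tsg ((N : ℝ) * T0) η0) := by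
    intro k hk
    set m : ℕ := N - 1 - k with hm
    have hmk : m + 1 + k = N := by omega
    have hmkR : (m : ℝ) + 1 + (k : ℝ) = (N : ℝ) := by exact_mod_cast hmk
    set g : ℝ → H := fun ρ => Tsg (T0 - ρ) (B (e (w (z k) ρ))) with hg
    set g' : ℝ → H := fun r => Tsg ((m : ℝ) * T0) (g (r - a k)) with hg'
    have hcle : a k ≤ a (k + 1) := by
      rw [ha]; push_cast; nlinarith
    have hak1 : a (k + 1) = a k + T0 := by rw [ha]; push_cast; ring
    -- pointwise agreement on the open interval
    have heq : ∀ r ∈ Set.Ioo (a k) (a (k + 1)), F r = g' r := by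
      intro r hr
      have hidxr := hidxeq k hk r hr
      have hr2 : r < a k + T0 := by rw [← hak1]; exact hr.2
      have hnn1 : (0 : ℝ) ≤ (m : ℝ) * T0 := hkT0nn m
      have hnn2 : (0 : ℝ) ≤ T0 - (r - a k) := by linarith
      have harith : (m : ℝ) * T0 + (T0 - (r - a k)) = (N : ℝ) * T0 - r := by
        rw [ha]
        linear_combination T0 * hmkR
      rw [hF, hg', hg, hv]
      simp only [hidxr]
      rw [← harith, hTadd _ _ hnn1 hnn2]
      rfl
    -- integrability of the shifted piece
    have h1 : IntervalIntegrable (fun ρ => Tsg ((m : ℝ) * T0) (g ρ)) volume 0 T0 := by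
      refine ⟨(Tsg ((m : ℝ) * T0)).integrable_comp (hwint (z k)).1,
        (Tsg ((m : ℝ) * T0)).integrable_comp (hwint (z k)).2⟩
    have h2 : IntervalIntegrable g' volume (a k) (a (k + 1)) := by
      have := h1.comp_sub_right (a k)
      rw [hak1]
      simpa [hg', add_comm] using this
    -- a.e. agreement on the closed-open interval
    have hne : ∀ᵐ x : ℝ ∂volume, x ≠ a (k + 1) := by
      rw [ae_iff]
      have hset : {x : ℝ | ¬x ≠ a (k + 1)} = {a (k + 1)} := by ext x; simp
      rw [hset]
      exact measure_singleton _
    have hae : ∀ᵐ x : ℝ ∂volume, x ∈ Set.uIoc (a k) (a (k + 1)) → F x = g' x := by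
      filter_upwards [hne] with x hx hmem
      rw [Set.uIoc_of_le hcle] at hmem
      exact heq x ⟨hmem.1, lt_of_le_of_ne hmem.2 hx⟩
    have haeres : F =ᵐ[volume.restrict (Set.uIoc (a k) (a (k + 1)))] g' :=
      (ae_restrict_iff' measurableSet_uIoc).2 hae
    have hint : IntervalIntegrable F volume (a k) (a (k + 1)) := h2.congr_ae haeres.symm
    refine ⟨hint, ?_⟩
    -- compute the integral
    have e1 : ∫ r in (a k)..(a (k + 1)), F r = ∫ r in (a k)..(a (k + 1)), g' r :=
      intervalIntegral.integral_congr_ae hae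
    have e2 : ∫ r in (a k)..(a (k + 1)), g' r
        = ∫ ρ in (0 : ℝ)..T0, Tsg ((m : ℝ) * T0) (g ρ) := by
      rw [hak1]
      have := intervalIntegral.integral_comp_sub_right
        (a := a k) (b := a k + T0) (fun ρ => Tsg ((m : ℝ) * T0) (g ρ)) (a k)
      simpa [hg'] using this
    have e3 : ∫ ρ in (0 : ℝ)..T0, Tsg ((m : ℝ) * T0) (g ρ)
        = Tsg ((m : ℝ) * T0) (∫ ρ in (0 : ℝ)..T0, g ρ) :=
      (Tsg ((m : ℝ) * T0)).intervalIntegral_comp_comm (hwint (z k))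
    have e4 : ∫ ρ in (0 : ℝ)..T0, g ρ = -(Tsg T0 (z k)) :=
      eq_neg_of_add_eq_zero_right (hwnull (z k))
    have c1 : Tsg T0 (Tsg ((k : ℝ) * T0) η0) = Tsg (T0 + (k : ℝ) * T0) η0 := by
      rw [hTadd _ _ hT0pos.le (hkT0nn k)]; rfl
    have c2 : Tsg ((m : ℝ) * T0) (Tsg (T0 + (k : ℝ) * T0) η0)
        = Tsg ((m : ℝ) * T0 + (T0 + (k : ℝ) * T0)) η0 := by
      rw [hTadd _ _ (hkT0nn m) (by positivity)]; rfl
    have e5 : Tsg ((m : ℝ) * T0) (Tsg T0 (z k)) = ((N : ℝ)⁻¹) • Tsg ((N : ℝ) * T0) η0 := by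
      rw [hz]
      rw [(Tsg T0).map_smul, (Tsg ((m : ℝ) * T0)).map_smul]
      have harg : (m : ℝ) * T0 + (T0 + (k : ℝ) * T0) = (N : ℝ) * T0 := by
        linear_combination T0 * hmkR
      rw [c1, c2, harg]
    rw [e1, e2, e3, e4, map_neg, e5]
  -- assemble
  have hintall : ∀ k < N, IntervalIntegrable F volume (a k) (a (k + 1)) :=
    fun k hk => (hpiece k hk).1
  have ha0 : a 0 = 0 := by simp [ha]
  have haN : a N = (N : ℝ) * T0 := by simp [ha]
  have hintF : IntervalIntegrable F volume 0 ((N : ℝ) * T0) := by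
    have := IntervalIntegrable.trans_iterate hintall
    rwa [ha0, haN] at this
  refine ⟨hintF, ?_⟩
  have hsum : ∑ k ∈ Finset.range N, ∫ r in (a k)..(a (k + 1)), F r
      = ∫ r in (a 0)..(a N), F r :=
    intervalIntegral.sum_integral_adjacent_intervals hintall
  have hsumval : ∑ k ∈ Finset.range N, ∫ r in (a k)..(a (k + 1)), F r
      = -(Tsg ((N : ℝ) * T0) η0) := by
    rw [Finset.sum_congr rfl fun k hk => (hpiece k (Finset.mem_range.mp hk)).2]
    rw [Finset.sum_const, Finset.card_range, smul_neg, ← Nat.cast_smul_eq_nsmul ℝ,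
      smul_smul, mul_inv_cancel₀ (ne_of_gt hNR), one_smul]
  have : ∫ r in (0 : ℝ)..((N : ℝ) * T0), F r = -(Tsg ((N : ℝ) * T0) η0) := by
    rw [← ha0, ← haN, ← hsum, hsumval]
  rw [this]
  simp
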